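/- Let F ∈ 𝓕, 1 ≤ p < ∞, g ∈ BMO_F ∩ Lᵖ(ℝ²), and f ∈ LMO_F ∩ L^∞(ℝ²). Then fg ∈ BMO_F ∩ Lᵖ and ‖fg‖_{BMO_F} ≤ C·‖f‖_{LMO_F ∩ L^∞}·‖g‖_{BMO_F ∩ Lᵖ}, with C independent of f and g. -/

import Mathlib

open MeasureTheory Metric Real Filter

noncomputable section

/-- The plane `ℝ²`. -/
abbrev Plane := EuclideanSpace ℝ (Fin 2)

/-- Average of `f` over the ball `B(c,r)` (with respect to Lebesgue measure). -/
def ballAvg (f : Plane → ℝ) (c : Plane) (r : ℝ) : ℝ := ⨍ y in ball c r, f y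

/-- `K` is a bound for all mean oscillations of `f` (i.e. `‖f‖_BMO ≤ K`). -/
def OscBound (f : Plane → ℝ) (K : ℝ) : Prop :=
  ∀ c r, 0 < r → (⨍ y in ball c r, |f y - ballAvg f c r|) ≤ K

/-- The `BMO` seminorm of `f`, as a supremum of mean oscillations. -/
def bmoNorm (f : Plane → ℝ) : ℝ :=
  sSup {m | ∃ c r, 0 < r ∧ m = ⨍ y in ball c r, |f y - ballAvg f c r|}

/-- `K` bounds the second (weighted pair of balls) part of the `BMO_F` norm of `f`. -/
def PairBoundF (F : ℝ → ℝ) (f : Plane → ℝ) (K : ℝ) : Prop :=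
  ∀ c₁ r₁ c₂ r₂, 0 < r₂ → 0 < r₁ → r₁ ≤ 1 → ball c₂ (2 * r₂) ⊆ ball c₁ r₁ →
    |ballAvg f c₂ r₂ - ballAvg f c₁ r₁| ≤ K * F ((1 - Real.log r₂) / (1 - Real.log r₁))

/-- The `BMO_F` norm of `f`. -/
def bmoFNorm (F : ℝ → ℝ) (f : Plane → ℝ) : ℝ :=
  bmoNorm f +
    sSup {m | ∃ c₁ r₁ c₂ r₂, 0 < r₂ ∧ 0 < r₁ ∧ r₁ ≤ 1 ∧ ball c₂ (2 * r₂) ⊆ ball c₁ r₁ ∧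
      m = |ballAvg f c₂ r₂ - ballAvg f c₁ r₁| / F ((1 - Real.log r₂) / (1 - Real.log r₁))}

/-- Membership in the space `BMO_F`. -/
def MemBMOF (F : ℝ → ℝ) (f : Plane → ℝ) : Prop :=
  LocallyIntegrable f volume ∧ ∃ K, OscBound f K ∧ PairBoundF F f K

/-- The `LMO_F` norm of `f`. -/
def lmoFNorm (F : ℝ → ℝ) (f : Plane → ℝ) : ℝ :=
  sSup {m | ∃ c r, 0 < r ∧ r ≤ 1 ∧
      m = F (1 - Real.log r) * ⨍ y in ball c r, |f y - ballAvg f c r|} +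
  sSup {m | ∃ c₁ r₁ c₂ r₂, 0 < r₂ ∧ 0 < r₁ ∧ r₁ ≤ 1 ∧ ball c₂ (2 * r₂) ⊆ ball c₁ r₁ ∧
      m = F (1 - Real.log r₁) * |ballAvg f c₂ r₂ - ballAvg f c₁ r₁|}

/-- Membership in the space `LMO_F`. -/
def MemLMOF (F : ℝ → ℝ) (f : Plane → ℝ) : Prop :=
  LocallyIntegrable f volume ∧ ∃ K,
    (∀ c r, 0 < r → r ≤ 1 →
      F (1 - Real.log r) * ⨍ y in ball c r, |f y - ballAvg f c r| ≤ K) ∧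
    (∀ c₁ r₁ c₂ r₂, 0 < r₂ → 0 < r₁ → r₁ ≤ 1 → ball c₂ (2 * r₂) ⊆ ball c₁ r₁ →
      F (1 - Real.log r₁) * |ballAvg f c₂ r₂ - ballAvg f c₁ r₁| ≤ K)

/-- The `L^∞` norm. -/
def supNorm (f : Plane → ℝ) : ℝ := (eLpNorm f ⊤ volume).toReal

/-- The `L^p` norm for a real exponent `p`. -/
def lpNorm (p : ℝ) (f : Plane → ℝ) : ℝ := (eLpNorm f (ENNReal.ofReal p) volume).toReal

/-- The class `𝓕` of admissible weight functions: nondecreasing on `[1,∞)`, `≥ 1` there,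
blowing up at infinity, with the exponential-integral decay condition and submultiplicativity. -/
def ClassF (F : ℝ → ℝ) : Prop :=
  (∀ x, 1 ≤ x → 1 ≤ F x) ∧ (∀ x y, 1 ≤ x → x ≤ y → F x ≤ F y) ∧
  Tendsto F atTop atTop ∧
  ∃ C, 0 < C ∧
    (∀ l x, 1 ≤ l → l ≤ x →
      (∫ y in Set.Ici x, Real.exp (-y / l) * F y) ≤ C * l * Real.exp (-x / l) * F x) ∧
    (∀ x y, 1 ≤ x → 1 ≤ y → F (x * y) ≤ C * F x * F y)

end
noncomputable section Helpers

namespace PL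
open ENNReal

/-- volume of the ball of radius 1/2. -/
def V : ℝ := (volume (ball (0:Plane) 2⁻¹)).toReal

lemma vtr_pos (c : Plane) {r : ℝ} (hr : 0 < r) : 0 < (volume (ball c r)).toReal :=
  ENNReal.toReal_pos (measure_ball_pos volume c hr).ne' measure_ball_lt_top.ne

lemma V_pos : 0 < V := vtr_pos _ (by norm_num)

def cg : ℝ := max 1 V⁻¹

lemma one_le_cg : 1 ≤ cg := le_max_left _ _
lemma cg_pos : 0 < cg := lt_of_lt_of_le one_pos one_le_cg

lemma ballAvg_eq (f : Plane → ℝ) (c : Plane) (r : ℝ) :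
    ballAvg f c r = ((volume (ball c r)).toReal)⁻¹ * ∫ y in ball c r, f y := by
  rw [ballAvg, setAverage_eq, smul_eq_mul, measureReal_def]

lemma intOn {f : Plane → ℝ} (hf : LocallyIntegrable f volume) (c : Plane) (r : ℝ) :
    IntegrableOn f (ball c r) volume :=
  (hf.integrableOn_isCompact (isCompact_closedBall c r)).mono_set ball_subset_closedBall

lemma abs_avg_le {f : Plane → ℝ} {c : Plane} {r : ℝ} (hf : IntegrableOn f (ball c r) volume) :
    |ballAvg f c r| ≤ ((volume (ball c r)).toReal)⁻¹ * ∫ y in ball c r, |f y| := by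
  rw [ballAvg_eq, abs_mul, abs_of_nonneg (inv_nonneg.2 ENNReal.toReal_nonneg)]
  gcongr
  simpa [Real.norm_eq_abs] using norm_integral_le_integral_norm (μ := volume.restrict (ball c r)) f

lemma rad_lt {c₁ c₂ : Plane} {r₁ r₂ : ℝ} (h2 : 0 < r₂)
    (hsub : ball c₂ (2*r₂) ⊆ ball c₁ r₁) : r₂ < r₁ := by
  set u : Plane := EuclideanSpace.single (0 : Fin 2) r₂ with hu
  have hnu : ‖u‖ = r₂ := by rw [hu, EuclideanSpace.norm_single, Real.norm_eq_abs, abs_of_pos h2]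
  have h1 : c₂ + u ∈ ball c₂ (2*r₂) := by
    simp [mem_ball, dist_eq_norm, hnu]; linarith
  have h2' : c₂ - u ∈ ball c₂ (2*r₂) := by
    simp [mem_ball, dist_eq_norm, hnu]; linarith
  have d1 := mem_ball.1 (hsub h1)
  have d2 := mem_ball.1 (hsub h2')
  have : dist (c₂ + u) (c₂ - u) = 2 * r₂ := by
    rw [dist_eq_norm]
    have : (c₂ + u) - (c₂ - u) = (2:ℝ) • u := by module
    rw [this, norm_smul, hnu]; norm_num
  have htri := dist_triangle (c₂ + u) c₁ (c₂ - u)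
  rw [this, dist_comm c₁ (c₂ - u)] at htri
  linarith

end PL
end Helpers
noncomputable section Helpers2
namespace PL
open ENNReal

lemma holder_ball {p : ℝ} (hp : 1 ≤ p) {g : Plane → ℝ}
    (hg : MeasureTheory.MemLp g (ENNReal.ofReal p) volume)
    {c : Plane} {r : ℝ} (hr : (2:ℝ)⁻¹ ≤ r) :
    ((volume (ball c r)).toReal)⁻¹ * ∫ y in ball c r, |g y| ≤ cg * lpNorm p g := by
  classical
  set B := ball c r with hB
  have hr0 : (0:ℝ) < r := lt_of_lt_of_le (by norm_num) hr
  set v : ℝ := (volume B).toReal with hv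
  have hv0 : 0 < v := vtr_pos c hr0
  have hvV : V ≤ v := by
    rw [hv, V]
    have h1 : volume (ball (0:Plane) 2⁻¹) = volume (ball c 2⁻¹) :=
      (Measure.addHaar_ball_center volume c 2⁻¹).symm
    rw [h1]
    exact ENNReal.toReal_mono measure_ball_lt_top.ne
      (measure_mono (ball_subset_ball hr))
  have hq1 : (1:ℝ≥0∞) ≤ ENNReal.ofReal p := by
    simpa using ENNReal.one_le_ofReal.2 hp
  have hqt : (ENNReal.ofReal p).toReal = p := ENNReal.toReal_ofReal (by linarith)
  have hmeas : AEStronglyMeasurable g (volume.restrict B) := hg.1.restrict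
  have hInt : IntegrableOn g B volume :=
    ((hg.locallyIntegrable hq1).integrableOn_isCompact (isCompact_closedBall c r)).mono_set
      ball_subset_closedBall
  -- Hölder in ENNReal
  have key := eLpNorm_le_eLpNorm_mul_rpow_measure_univ (μ := volume.restrict B)
      hq1 hmeas
  have hrestr : eLpNorm g (ENNReal.ofReal p) (volume.restrict B)
      ≤ eLpNorm g (ENNReal.ofReal p) volume :=
    eLpNorm_mono_measure _ Measure.restrict_le_self
  have huniv : (volume.restrict B) Set.univ = volume B := by
    simp [Measure.restrict_apply_univ]
  have h1' : eLpNorm g 1 (volume.restrict B) = ENNReal.ofReal (∫ y in B, |g y|) := by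
    rw [eLpNorm_one_eq_lintegral_enorm,
      ← ofReal_integral_norm_eq_lintegral_enorm hInt]
    simp [Real.norm_eq_abs]
  set e : ℝ := 1 - 1/p with he
  have hp1 : 1/p ≤ 1 := by
    rw [div_le_one (by linarith)]; exact hp
  have he0 : 0 ≤ e := by rw [he]; linarith
  have key2 : ENNReal.ofReal (∫ y in B, |g y|) ≤
      eLpNorm g (ENNReal.ofReal p) volume * (volume B) ^ e := by
    rw [← h1']
    calc eLpNorm g 1 (volume.restrict B)
        ≤ eLpNorm g (ENNReal.ofReal p) (volume.restrict B) *
          (volume.restrict B) Set.univ ^ (1/(1:ℝ≥0∞).toReal - 1/(ENNReal.ofReal p).toReal) := key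
      _ = eLpNorm g (ENNReal.ofReal p) (volume.restrict B) * (volume B) ^ e := by
          rw [huniv, hqt]; norm_num [he]
      _ ≤ eLpNorm g (ENNReal.ofReal p) volume * (volume B) ^ e := by gcongr
  have hfin : eLpNorm g (ENNReal.ofReal p) volume * (volume B) ^ e ≠ ⊤ := by
    apply ENNReal.mul_ne_top hg.eLpNorm_lt_top.ne
    exact (ENNReal.rpow_lt_top_of_nonneg he0 measure_ball_lt_top.ne).ne
  have key3 : (∫ y in B, |g y|) ≤ lpNorm p g * v ^ e := by
    have h0 : 0 ≤ ∫ y in B, |g y| := integral_nonneg fun x => abs_nonneg _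
    have := ENNReal.toReal_mono hfin key2
    rwa [ENNReal.toReal_ofReal h0, ENNReal.toReal_mul, ← ENNReal.toReal_rpow] at this
  -- combine
  have hvpow : v⁻¹ * (v ^ e) = v ^ (-(1/p)) := by
    rw [← Real.rpow_neg_one v, ← Real.rpow_add hv0, he]
    ring_nf
  have hpowcg : v ^ (-(1/p)) ≤ cg := by
    rcases le_or_gt 1 v with h1 | h1
    · refine le_trans (Real.rpow_le_one_of_one_le_of_nonpos h1 ?_) one_le_cg
      have : 0 < 1/p := by positivity
      linarith
    · have h2 : v ^ (-(1/p)) ≤ v ^ (-1:ℝ) :=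
        Real.rpow_le_rpow_of_exponent_ge hv0 h1.le (by linarith)
      rw [Real.rpow_neg_one] at h2
      refine h2.trans (le_trans ?_ (le_max_right 1 V⁻¹))
      exact inv_anti₀ V_pos hvV
  have hGp : 0 ≤ lpNorm p g := ENNReal.toReal_nonneg
  calc ((volume B).toReal)⁻¹ * ∫ y in B, |g y|
      ≤ v⁻¹ * (lpNorm p g * v ^ e) := by
        exact mul_le_mul_of_nonneg_left key3 (inv_nonneg.2 hv0.le)
    _ = lpNorm p g * (v⁻¹ * v ^ e) := by ring
    _ = lpNorm p g * v ^ (-(1/p)) := by rw [hvpow]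
    _ ≤ lpNorm p g * cg := mul_le_mul_of_nonneg_left hpowcg hGp
    _ = cg * lpNorm p g := mul_comm _ _

end PL
end Helpers2
noncomputable section Helpers3
namespace PL
open ENNReal

variable {h f g : Plane → ℝ} {c : Plane} {r : ℝ}

lemma intOn_const {a : ℝ} : IntegrableOn (fun _ : Plane => a) (ball c r) volume :=
  integrableOn_const measure_ball_lt_top.ne

lemma avg_sub_const (hr : 0 < r) (hint : IntegrableOn h (ball c r) volume) (a : ℝ) :
    |ballAvg h c r - a| ≤ ((volume (ball c r)).toReal)⁻¹ * ∫ y in ball c r, |h y - a| := by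
  set B := ball c r
  set v : ℝ := (volume B).toReal with hv
  have hv0 : 0 < v := vtr_pos c hr
  have hsub : IntegrableOn (fun y => h y - a) B volume := hint.sub intOn_const
  have h1 : ballAvg h c r - a = v⁻¹ * ∫ y in B, (h y - a) := by
    rw [integral_sub hint intOn_const, setIntegral_const, smul_eq_mul, ballAvg_eq, measureReal_def]
    field_simp
    simp only [hv, B]
    ring
  rw [h1, abs_mul, abs_of_nonneg (inv_nonneg.2 hv0.le)]
  gcongr
  simpa [Real.norm_eq_abs] using
    norm_integral_le_integral_norm (μ := volume.restrict B) (fun y => h y - a)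

lemma avg_abs_le_of_ae {M : ℝ} (hr : 0 < r) (hint : IntegrableOn h (ball c r) volume)
    (hM : ∀ᵐ y ∂volume, |h y| ≤ M) : |ballAvg h c r| ≤ M := by
  set B := ball c r
  set v : ℝ := (volume B).toReal with hv
  have hv0 : 0 < v := vtr_pos c hr
  refine (abs_avg_le hint).trans ?_
  have : (∫ y in B, |h y|) ≤ ∫ _y in B, M := by
    refine integral_mono_ae hint.abs intOn_const ?_
    exact ae_restrict_of_ae (hM.mono fun y hy => hy)
  calc v⁻¹ * ∫ y in B, |h y| ≤ v⁻¹ * ∫ _y in B, M := by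
        exact mul_le_mul_of_nonneg_left this (inv_nonneg.2 hv0.le)
    _ = v⁻¹ * (v * M) := by rw [setIntegral_const, smul_eq_mul, measureReal_def]
    _ = M := by field_simp

lemma osc_le_two (hr : 0 < r) (hint : IntegrableOn h (ball c r) volume) (a : ℝ) :
    (⨍ y in ball c r, |h y - ballAvg h c r|) ≤
      2 * (((volume (ball c r)).toReal)⁻¹ * ∫ y in ball c r, |h y - a|) := by
  set B := ball c r
  set v : ℝ := (volume B).toReal with hv
  have hv0 : 0 < v := vtr_pos c hr
  set A : ℝ := ballAvg h c r with hA
  have hAa : |A - a| ≤ v⁻¹ * ∫ y in B, |h y - a| := avg_sub_const hr hint a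
  have hint1 : IntegrableOn (fun y => |h y - A|) B volume := (hint.sub intOn_const).abs
  have hint2 : IntegrableOn (fun y => |h y - a| + |A - a|) B volume :=
    (hint.sub intOn_const).abs.add intOn_const
  have hIa : IntegrableOn (fun y => |h y - a|) B volume := (hint.sub intOn_const).abs
  have hIc : IntegrableOn (fun _ : Plane => |A - a|) B volume := intOn_const
  have hmono : (∫ y in B, |h y - A|) ≤ ∫ y in B, (|h y - a| + |A - a|) := by
    refine integral_mono_ae hint1 hint2 (Eventually.of_forall fun y => ?_)
    calc |h y - A| = |(h y - a) + (a - A)| := by rw [sub_add_sub_cancel]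
      _ ≤ |h y - a| + |a - A| := abs_add_le _ _
      _ = |h y - a| + |A - a| := by rw [abs_sub_comm a A]
  have hsum : (∫ y in B, (|h y - a| + |A - a|)) = (∫ y in B, |h y - a|) + v * |A - a| := by
    rw [integral_add hIa hIc, setIntegral_const, smul_eq_mul, measureReal_def]
  rw [setAverage_eq, smul_eq_mul]
  calc v⁻¹ * ∫ y in B, |h y - A| ≤ v⁻¹ * ((∫ y in B, |h y - a|) + v * |A - a|) := by
        refine mul_le_mul_of_nonneg_left ?_ (inv_nonneg.2 hv0.le)
        rw [← hsum]; exact hmono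
    _ = v⁻¹ * (∫ y in B, |h y - a|) + |A - a| := by field_simp
    _ ≤ v⁻¹ * (∫ y in B, |h y - a|) + v⁻¹ * ∫ y in B, |h y - a| := by linarith
    _ = 2 * (v⁻¹ * ∫ y in B, |h y - a|) := by ring

lemma prod_int_bound {M : ℝ} (hM : 0 ≤ M) (hfM : ∀ᵐ y ∂volume, |f y| ≤ M)
    (hr : 0 < r) (hfi : IntegrableOn f (ball c r) volume)
    (hgi : IntegrableOn g (ball c r) volume)
    (hfgi : IntegrableOn (fun y => f y * g y) (ball c r) volume) :
    ((volume (ball c r)).toReal)⁻¹ *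
        ∫ y in ball c r, |f y * g y - ballAvg f c r * ballAvg g c r| ≤
      M * (⨍ y in ball c r, |g y - ballAvg g c r|) +
        |ballAvg g c r| * (⨍ y in ball c r, |f y - ballAvg f c r|) := by
  set B := ball c r
  set v : ℝ := (volume B).toReal with hv
  have hv0 : 0 < v := vtr_pos c hr
  set Af : ℝ := ballAvg f c r
  set Ag : ℝ := ballAvg g c r
  have hint1 : IntegrableOn (fun y => |f y * g y - Af * Ag|) B volume :=
    (hfgi.sub intOn_const).abs
  have hint2 : IntegrableOn (fun y => M * |g y - Ag| + |Ag| * |f y - Af|) B volume :=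
    ((hgi.sub intOn_const).abs.const_mul M).add ((hfi.sub intOn_const).abs.const_mul |Ag|)
  have hmono : (∫ y in B, |f y * g y - Af * Ag|) ≤
      ∫ y in B, (M * |g y - Ag| + |Ag| * |f y - Af|) := by
    refine integral_mono_ae hint1 hint2 ?_
    refine ae_restrict_of_ae (hfM.mono fun y hy => ?_)
    calc |f y * g y - Af * Ag| = |f y * (g y - Ag) + Ag * (f y - Af)| := by ring_nf
      _ ≤ |f y * (g y - Ag)| + |Ag * (f y - Af)| := abs_add_le _ _
      _ = |f y| * |g y - Ag| + |Ag| * |f y - Af| := by rw [abs_mul, abs_mul]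
      _ ≤ M * |g y - Ag| + |Ag| * |f y - Af| := by
          have := abs_nonneg (g y - Ag); nlinarith [abs_nonneg (f y - Af)]
  have hIg : IntegrableOn (fun y => M * |g y - Ag|) B volume :=
    (hgi.sub intOn_const).abs.const_mul M
  have hIf : IntegrableOn (fun y => |Ag| * |f y - Af|) B volume :=
    (hfi.sub intOn_const).abs.const_mul |Ag|
  have hsum : (∫ y in B, (M * |g y - Ag| + |Ag| * |f y - Af|)) =
      M * (∫ y in B, |g y - Ag|) + |Ag| * (∫ y in B, |f y - Af|) := by
    rw [integral_add hIg hIf, integral_const_mul, integral_const_mul]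
  have havg1 : (⨍ y in B, |g y - Ag|) = v⁻¹ * ∫ y in B, |g y - Ag| := by
    rw [setAverage_eq, smul_eq_mul, measureReal_def]
  have havg2 : (⨍ y in B, |f y - Af|) = v⁻¹ * ∫ y in B, |f y - Af| := by
    rw [setAverage_eq, smul_eq_mul, measureReal_def]
  rw [havg1, havg2]
  calc v⁻¹ * ∫ y in B, |f y * g y - Af * Ag|
      ≤ v⁻¹ * (M * (∫ y in B, |g y - Ag|) + |Ag| * (∫ y in B, |f y - Af|)) := by
        refine mul_le_mul_of_nonneg_left (hmono.trans_eq hsum) (inv_nonneg.2 hv0.le)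
    _ = M * (v⁻¹ * ∫ y in B, |g y - Ag|) + |Ag| * (v⁻¹ * ∫ y in B, |f y - Af|) := by ring

end PL
end Helpers3
noncomputable section Helpers4
namespace PL
open ENNReal

variable {F : ℝ → ℝ} {f : Plane → ℝ} {K : ℝ}

lemma avg_abs_nonneg (f : Plane → ℝ) (c : Plane) (r : ℝ) (a : ℝ) :
    0 ≤ ⨍ y in ball c r, |f y - a| := by
  rw [setAverage_eq, smul_eq_mul]
  exact mul_nonneg (inv_nonneg.2 ENNReal.toReal_nonneg)
    (integral_nonneg fun _ => abs_nonneg _)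

lemma one_le_omlog {r : ℝ} (hr : 0 < r) (hr1 : r ≤ 1) : 1 ≤ 1 - Real.log r := by
  have := Real.log_nonpos hr.le hr1; linarith

lemma one_le_ratio {r₁ r₂ : ℝ} (h₂ : 0 < r₂) (h₁₂ : r₂ < r₁) (h₁ : r₁ ≤ 1) :
    1 ≤ (1 - Real.log r₂) / (1 - Real.log r₁) := by
  have hl : Real.log r₂ ≤ Real.log r₁ := Real.log_le_log h₂ h₁₂.le
  have h1 : 1 ≤ 1 - Real.log r₁ := one_le_omlog (h₂.trans h₁₂) h₁
  rw [one_le_div (by linarith)]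
  linarith

/-- The second part of the `BMO_F` norm. -/
def pairSup (F : ℝ → ℝ) (f : Plane → ℝ) : ℝ :=
  sSup {m | ∃ c₁ r₁ c₂ r₂, 0 < r₂ ∧ 0 < r₁ ∧ r₁ ≤ 1 ∧ ball c₂ (2 * r₂) ⊆ ball c₁ r₁ ∧
      m = |ballAvg f c₂ r₂ - ballAvg f c₁ r₁| / F ((1 - Real.log r₂) / (1 - Real.log r₁))}

lemma bmoFNorm_eq : bmoFNorm F f = bmoNorm f + pairSup F f := rfl

def lmoSup1 (F : ℝ → ℝ) (f : Plane → ℝ) : ℝ :=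
  sSup {m | ∃ c r, 0 < r ∧ r ≤ 1 ∧
      m = F (1 - Real.log r) * ⨍ y in ball c r, |f y - ballAvg f c r|}

def lmoSup2 (F : ℝ → ℝ) (f : Plane → ℝ) : ℝ :=
  sSup {m | ∃ c₁ r₁ c₂ r₂, 0 < r₂ ∧ 0 < r₁ ∧ r₁ ≤ 1 ∧ ball c₂ (2 * r₂) ⊆ ball c₁ r₁ ∧
      m = F (1 - Real.log r₁) * |ballAvg f c₂ r₂ - ballAvg f c₁ r₁|}

lemma lmoFNorm_eq : lmoFNorm F f = lmoSup1 F f + lmoSup2 F f := rfl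

section withF
variable (hF1 : ∀ x, 1 ≤ x → 1 ≤ F x)
include hF1

lemma pair_bddAbove (hK : PairBoundF F f K) :
    BddAbove {m | ∃ c₁ r₁ c₂ r₂, 0 < r₂ ∧ 0 < r₁ ∧ r₁ ≤ 1 ∧ ball c₂ (2 * r₂) ⊆ ball c₁ r₁ ∧
      m = |ballAvg f c₂ r₂ - ballAvg f c₁ r₁| / F ((1 - Real.log r₂) / (1 - Real.log r₁))} := by
  refine ⟨max K 0, ?_⟩
  rintro m ⟨c₁, r₁, c₂, r₂, h₂, h₁, h₁1, hsub, rfl⟩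
  have hFpos : 0 < F ((1 - Real.log r₂) / (1 - Real.log r₁)) :=
    lt_of_lt_of_le one_pos (hF1 _ (one_le_ratio h₂ (rad_lt h₂ hsub) h₁1))
  rw [div_le_iff₀ hFpos]
  calc |ballAvg f c₂ r₂ - ballAvg f c₁ r₁| ≤ K * F ((1 - Real.log r₂) / (1 - Real.log r₁)) :=
        hK c₁ r₁ c₂ r₂ h₂ h₁ h₁1 hsub
    _ ≤ max K 0 * F ((1 - Real.log r₂) / (1 - Real.log r₁)) := by
        exact mul_le_mul_of_nonneg_right (le_max_left _ _) hFpos.le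

lemma pair_le (hK : PairBoundF F f K) {c₁ r₁ c₂ r₂ : _} (h₂ : 0 < r₂) (h₁ : 0 < r₁)
    (h₁1 : r₁ ≤ 1) (hsub : ball c₂ (2 * r₂) ⊆ ball c₁ r₁) :
    |ballAvg f c₂ r₂ - ballAvg f c₁ r₁| ≤
      pairSup F f * F ((1 - Real.log r₂) / (1 - Real.log r₁)) := by
  have hFpos : 0 < F ((1 - Real.log r₂) / (1 - Real.log r₁)) :=
    lt_of_lt_of_le one_pos (hF1 _ (one_le_ratio h₂ (rad_lt h₂ hsub) h₁1))
  have hmem : |ballAvg f c₂ r₂ - ballAvg f c₁ r₁| / F ((1 - Real.log r₂) / (1 - Real.log r₁)) ≤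
      pairSup F f := le_csSup (pair_bddAbove hF1 hK) ⟨c₁, r₁, c₂, r₂, h₂, h₁, h₁1, hsub, rfl⟩
  rwa [div_le_iff₀ hFpos] at hmem

lemma pairSup_nonneg (hK : PairBoundF F f K) : 0 ≤ pairSup F f := by
  have hsub : ball (0:Plane) (2 * 4⁻¹) ⊆ ball (0:Plane) 1 := ball_subset_ball (by norm_num)
  have hmem : |ballAvg f 0 4⁻¹ - ballAvg f 0 1| / F ((1 - Real.log 4⁻¹) / (1 - Real.log 1)) ∈
      {m | ∃ c₁ r₁ c₂ r₂, 0 < r₂ ∧ 0 < r₁ ∧ r₁ ≤ 1 ∧ ball c₂ (2 * r₂) ⊆ ball c₁ r₁ ∧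
        m = |ballAvg f c₂ r₂ - ballAvg f c₁ r₁| / F ((1 - Real.log r₂) / (1 - Real.log r₁))} :=
    ⟨0, 1, 0, 4⁻¹, by norm_num, one_pos, le_refl 1, hsub, rfl⟩
  have hFpos : 0 < F ((1 - Real.log 4⁻¹) / (1 - Real.log 1)) :=
    lt_of_lt_of_le one_pos (hF1 _ (one_le_ratio (by norm_num) (by norm_num) le_rfl))
  exact le_trans (div_nonneg (abs_nonneg _) hFpos.le) (le_csSup (pair_bddAbove hF1 hK) hmem)

lemma lmo1_le (hK : ∀ c r, 0 < r → r ≤ 1 →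
      F (1 - Real.log r) * ⨍ y in ball c r, |f y - ballAvg f c r| ≤ K)
    {c : Plane} {r : ℝ} (hr : 0 < r) (hr1 : r ≤ 1) :
    F (1 - Real.log r) * (⨍ y in ball c r, |f y - ballAvg f c r|) ≤ lmoSup1 F f :=
  le_csSup ⟨K, by rintro m ⟨c', r', h', h1', rfl⟩; exact hK c' r' h' h1'⟩
    ⟨c, r, hr, hr1, rfl⟩

lemma lmoSup1_nonneg (hK : ∀ c r, 0 < r → r ≤ 1 →
      F (1 - Real.log r) * ⨍ y in ball c r, |f y - ballAvg f c r| ≤ K) :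
    0 ≤ lmoSup1 F f := by
  refine le_trans ?_ (lmo1_le hF1 hK one_pos le_rfl (c := 0))
  exact mul_nonneg (le_trans zero_le_one (hF1 _ (one_le_omlog one_pos le_rfl)))
    (avg_abs_nonneg f 0 1 _)

lemma lmo2_le (hK : ∀ c₁ r₁ c₂ r₂, 0 < r₂ → 0 < r₁ → r₁ ≤ 1 →
      ball c₂ (2 * r₂) ⊆ ball c₁ r₁ →
      F (1 - Real.log r₁) * |ballAvg f c₂ r₂ - ballAvg f c₁ r₁| ≤ K)
    {c₁ r₁ c₂ r₂ : _} (h₂ : 0 < r₂) (h₁ : 0 < r₁) (h₁1 : r₁ ≤ 1)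
    (hsub : ball c₂ (2 * r₂) ⊆ ball c₁ r₁) :
    F (1 - Real.log r₁) * |ballAvg f c₂ r₂ - ballAvg f c₁ r₁| ≤ lmoSup2 F f :=
  le_csSup ⟨K, by rintro m ⟨a, b, c, d, h1, h2, h3, h4, rfl⟩; exact hK a b c d h1 h2 h3 h4⟩
    ⟨c₁, r₁, c₂, r₂, h₂, h₁, h₁1, hsub, rfl⟩

lemma lmoSup2_nonneg (hK : ∀ c₁ r₁ c₂ r₂, 0 < r₂ → 0 < r₁ → r₁ ≤ 1 →
      ball c₂ (2 * r₂) ⊆ ball c₁ r₁ →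
      F (1 - Real.log r₁) * |ballAvg f c₂ r₂ - ballAvg f c₁ r₁| ≤ K) :
    0 ≤ lmoSup2 F f := by
  have hsub : ball (0:Plane) (2 * 4⁻¹) ⊆ ball (0:Plane) 1 := ball_subset_ball (by norm_num)
  refine le_trans ?_ (lmo2_le hF1 hK (by norm_num) one_pos le_rfl hsub)
  exact mul_nonneg (le_trans zero_le_one (hF1 _ (one_le_omlog one_pos le_rfl))) (abs_nonneg _)

end withF

lemma bmo_osc_le (hK : OscBound f K) {c : Plane} {r : ℝ} (hr : 0 < r) :
    (⨍ y in ball c r, |f y - ballAvg f c r|) ≤ bmoNorm f :=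
  le_csSup ⟨K, by rintro m ⟨c', r', h', rfl⟩; exact hK c' r' h'⟩ ⟨c, r, hr, rfl⟩

lemma bmoNorm_nonneg (hK : OscBound f K) : 0 ≤ bmoNorm f :=
  le_trans (avg_abs_nonneg f 0 1 _) (bmo_osc_le hK one_pos)

lemma bmoNorm_le (h : OscBound f K) (hK : 0 ≤ K) : bmoNorm f ≤ K :=
  Real.sSup_le (by rintro m ⟨c, r, hr, rfl⟩; exact h c r hr) hK

lemma pairSup_le (hF1 : ∀ x, 1 ≤ x → 1 ≤ F x) (h : PairBoundF F f K) (hK : 0 ≤ K) :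
    pairSup F f ≤ K := by
  refine Real.sSup_le ?_ hK
  rintro m ⟨c₁, r₁, c₂, r₂, h₂, h₁, h₁1, hsub, rfl⟩
  have hFpos : 0 < F ((1 - Real.log r₂) / (1 - Real.log r₁)) :=
    lt_of_lt_of_le one_pos (hF1 _ (one_le_ratio h₂ (rad_lt h₂ hsub) h₁1))
  rw [div_le_iff₀ hFpos]
  exact h c₁ r₁ c₂ r₂ h₂ h₁ h₁1 hsub

lemma alg_bound {a b s Fv : ℝ} (ha : 0 ≤ a) (hb : 0 ≤ b) (hs : 0 ≤ s) (hF : 1 ≤ Fv) :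
    (a + b * Fv) * (s / Fv) ≤ (a + b) * s := by
  have hF0 : 0 < Fv := lt_of_lt_of_le one_pos hF
  have h1 : (a + b * Fv) * (s / Fv) = a * s / Fv + b * s := by field_simp
  have h2 : a * s / Fv ≤ a * s := div_le_self (by positivity) hF
  nlinarith

end PL
end Helpers4
open scoped ENNReal

set_option maxHeartbeats 1000000
/-- For `F ∈ 𝓕`, `1 ≤ p < ∞`, `g ∈ BMO_F ∩ Lᵖ` and `f ∈ LMO_F ∩ L^∞`,
the product `fg` lies in `BMO_F ∩ Lᵖ` with
`‖fg‖_{BMO_F} ≤ C ‖f‖_{LMO_F ∩ L^∞} ‖g‖_{BMO_F ∩ Lᵖ}`, `C` independent of `f, g`. -/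
theorem product_law_bmoF :
    ∃ C : ℝ, 0 < C ∧
      ∀ (F : ℝ → ℝ), ClassF F →
        ∀ (p : ℝ), 1 ≤ p →
          ∀ (g f : Plane → ℝ),
            MemBMOF F g → MeasureTheory.MemLp g (ENNReal.ofReal p) volume →
            MemLMOF F f → MeasureTheory.MemLp f ⊤ volume →
            (MemBMOF F (fun x => f x * g x) ∧
              MeasureTheory.MemLp (fun x => f x * g x) (ENNReal.ofReal p) volume) ∧
            bmoFNorm F (fun x => f x * g x) ≤
              C * (lmoFNorm F f + supNorm f) * (bmoFNorm F g + lpNorm p g) := by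
  refine ⟨8 * PL.cg, by have := PL.cg_pos; linarith, ?_⟩
  intro F hF p hp g f hgB hgp hfL hfT
  obtain ⟨hF1, -, -, -⟩ := hF
  obtain ⟨hgloc, Kg, hgosc, hgpair⟩ := hgB
  obtain ⟨hfloc, Kf, hfosc, hfpair⟩ := hfL
  have hp1 : (1:ℝ≥0∞) ≤ ENNReal.ofReal p := ENNReal.one_le_ofReal.2 hp
  have hfgp : MeasureTheory.MemLp (fun x => f x * g x) (ENNReal.ofReal p) volume := by
    exact hgp.smul hfT
  have hfgloc : LocallyIntegrable (fun x => f x * g x) volume :=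
    hfgp.locallyIntegrable hp1
  set M := supNorm f with hMdef
  have hM0 : 0 ≤ M := ENNReal.toReal_nonneg
  have hfM : ∀ᵐ y ∂(volume : Measure Plane), |f y| ≤ M := by
    have hfin : eLpNormEssSup f (volume : Measure Plane) ≠ ⊤ := by
      rw [← eLpNorm_exponent_top]; exact hfT.2.ne
    filter_upwards [ae_le_eLpNormEssSup (f := f) (μ := (volume : Measure Plane))] with y hy
    have h2 := ENNReal.toReal_mono hfin hy
    simpa [hMdef, supNorm, eLpNorm_exponent_top, Real.norm_eq_abs] using h2
  set Gp := lpNorm p g with hGpdef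
  have hGp0 : 0 ≤ Gp := ENNReal.toReal_nonneg
  set Sg1 := bmoNorm g with hSg1def
  set Sg2 := PL.pairSup F g with hSg2def
  set Sf1 := PL.lmoSup1 F f with hSf1def
  set Sf2 := PL.lmoSup2 F f with hSf2def
  have hSg1_0 : 0 ≤ Sg1 := PL.bmoNorm_nonneg hgosc
  have hSg2_0 : 0 ≤ Sg2 := PL.pairSup_nonneg hF1 hgpair
  have hSf1_0 : 0 ≤ Sf1 := PL.lmoSup1_nonneg hF1 hfosc
  have hSf2_0 : 0 ≤ Sf2 := PL.lmoSup2_nonneg hF1 hfpair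
  have hcg1 : 1 ≤ PL.cg := PL.one_le_cg
  have hcg0 : 0 ≤ PL.cg := by linarith
  -- average bound for g on balls of radius at most 1
  have hAvgG : ∀ (c : Plane) (r : ℝ), 0 < r → r ≤ 1 →
      |ballAvg g c r| ≤ PL.cg * Gp + Sg2 * F (1 - Real.log r) := by
    intro c r hr hr1
    have hFr1 : 1 ≤ F (1 - Real.log r) := hF1 _ (PL.one_le_omlog hr hr1)
    rcases le_or_gt 2⁻¹ r with hhalf | hhalf
    · have h1 : |ballAvg g c r| ≤ PL.cg * Gp :=
        (PL.abs_avg_le (PL.intOn hgloc c r)).trans (PL.holder_ball hp hgp hhalf)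
      have h2 : 0 ≤ Sg2 * F (1 - Real.log r) := mul_nonneg hSg2_0 (by linarith)
      linarith
    · have hsub : ball c (2*r) ⊆ ball c 1 := ball_subset_ball (by linarith)
      have hpair := PL.pair_le hF1 hgpair hr one_pos le_rfl hsub
      have hlog1 : (1 - Real.log r) / (1 - Real.log 1) = 1 - Real.log r := by
        rw [Real.log_one]; norm_num
      rw [hlog1] at hpair
      have h1 : |ballAvg g c 1| ≤ PL.cg * Gp :=
        (PL.abs_avg_le (PL.intOn hgloc c 1)).trans (PL.holder_ball hp hgp (by norm_num))
      have htri := abs_add_le (ballAvg g c r - ballAvg g c 1) (ballAvg g c 1)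
      rw [sub_add_cancel] at htri
      calc |ballAvg g c r| ≤ |ballAvg g c r - ballAvg g c 1| + |ballAvg g c 1| := htri
        _ ≤ Sg2 * F (1 - Real.log r) + PL.cg * Gp := add_le_add hpair h1
        _ = PL.cg * Gp + Sg2 * F (1 - Real.log r) := by ring
  -- f oscillation and pair bounds
  have hOscF : ∀ (c : Plane) (r : ℝ), 0 < r → r ≤ 1 →
      (⨍ y in ball c r, |f y - ballAvg f c r|) ≤ Sf1 / F (1 - Real.log r) := by
    intro c r hr hr1
    have hFr1 : 1 ≤ F (1 - Real.log r) := hF1 _ (PL.one_le_omlog hr hr1)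
    have h := PL.lmo1_le hF1 hfosc hr hr1 (c := c)
    rw [le_div_iff₀ (by linarith), mul_comm]
    exact h
  have hPairF : ∀ c₁ r₁ c₂ r₂, 0 < r₂ → 0 < r₁ → r₁ ≤ 1 →
      ball c₂ (2 * r₂) ⊆ ball c₁ r₁ →
      |ballAvg f c₂ r₂ - ballAvg f c₁ r₁| ≤ Sf2 / F (1 - Real.log r₁) := by
    intro c₁ r₁ c₂ r₂ h₂ h₁ h₁1 hsub
    have hFr1 : 1 ≤ F (1 - Real.log r₁) := hF1 _ (PL.one_le_omlog h₁ h₁1)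
    have h := PL.lmo2_le hF1 hfpair h₂ h₁ h₁1 hsub
    rw [le_div_iff₀ (by linarith), mul_comm]
    exact h
  -- key estimate
  set T : ℝ := M * Sg1 + (PL.cg * Gp + Sg2) * Sf1 with hTdef
  have hT0 : 0 ≤ T :=
    add_nonneg (mul_nonneg hM0 hSg1_0)
      (mul_nonneg (add_nonneg (mul_nonneg hcg0 hGp0) hSg2_0) hSf1_0)
  have hKey : ∀ (c : Plane) (r : ℝ), 0 < r → r ≤ 1 →
      ((volume (ball c r)).toReal)⁻¹ *
        ∫ y in ball c r, |f y * g y - ballAvg f c r * ballAvg g c r| ≤ T := by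
    intro c r hr hr1
    have h1 := PL.prod_int_bound hM0 hfM hr (PL.intOn hfloc c r) (PL.intOn hgloc c r)
      (PL.intOn hfgloc c r)
    have h2 : (⨍ y in ball c r, |g y - ballAvg g c r|) ≤ Sg1 := PL.bmo_osc_le hgosc hr
    have hFr1 : 1 ≤ F (1 - Real.log r) := hF1 _ (PL.one_le_omlog hr hr1)
    have h3 : |ballAvg g c r| * (⨍ y in ball c r, |f y - ballAvg f c r|)
        ≤ (PL.cg * Gp + Sg2 * F (1 - Real.log r)) * (Sf1 / F (1 - Real.log r)) :=
      mul_le_mul (hAvgG c r hr hr1) (hOscF c r hr hr1) (PL.avg_abs_nonneg f c r _)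
        (add_nonneg (mul_nonneg hcg0 hGp0) (mul_nonneg hSg2_0 (by linarith)))
    have h4 : (PL.cg * Gp + Sg2 * F (1 - Real.log r)) * (Sf1 / F (1 - Real.log r))
        ≤ (PL.cg * Gp + Sg2) * Sf1 :=
      PL.alg_bound (mul_nonneg hcg0 hGp0) hSg2_0 hSf1_0 hFr1
    have h5 : M * (⨍ y in ball c r, |g y - ballAvg g c r|) ≤ M * Sg1 :=
      mul_le_mul_of_nonneg_left h2 hM0
    have h6 := h3.trans h4
    rw [hTdef]
    linarith
  -- oscillation bound for the product
  set K0 : ℝ := 2 * T + 2 * (M * (PL.cg * Gp)) with hK0def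
  have hMcg : 0 ≤ M * (PL.cg * Gp) := mul_nonneg hM0 (mul_nonneg hcg0 hGp0)
  have hK0_0 : 0 ≤ K0 := by rw [hK0def]; linarith
  have hOscFG : OscBound (fun x => f x * g x) K0 := by
    intro c r hr
    rcases le_or_gt r 1 with hr1 | hr1
    · have h0 := PL.osc_le_two hr (PL.intOn hfgloc c r) (ballAvg f c r * ballAvg g c r)
      have h1 := hKey c r hr hr1
      rw [hK0def]
      linarith
    · have h0 := PL.osc_le_two hr (PL.intOn hfgloc c r) 0
      have hv0 : (0:ℝ) < (volume (ball c r)).toReal := PL.vtr_pos c hr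
      have hint : (∫ y in ball c r, |f y * g y - 0|) ≤ M * ∫ y in ball c r, |g y| := by
        have hIfg : IntegrableOn (fun y => |f y * g y - 0|) (ball c r) volume := by
          simpa [IntegrableOn] using (PL.intOn hfgloc c r).abs
        have hIg : IntegrableOn (fun y => M * |g y|) (ball c r) volume :=
          (PL.intOn hgloc c r).abs.const_mul M
        have hm := integral_mono_ae hIfg hIg (ae_restrict_of_ae (hfM.mono fun y hy => by
          show |f y * g y - 0| ≤ M * |g y|
          rw [sub_zero, abs_mul]
          exact mul_le_mul_of_nonneg_right hy (abs_nonneg _)))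
        rwa [integral_const_mul] at hm
      have hhold : ((volume (ball c r)).toReal)⁻¹ * ∫ y in ball c r, |g y| ≤ PL.cg * Gp :=
        PL.holder_ball hp hgp (by linarith)
      have h2 : ((volume (ball c r)).toReal)⁻¹ * ∫ y in ball c r, |f y * g y - 0|
          ≤ M * (PL.cg * Gp) := by
        calc ((volume (ball c r)).toReal)⁻¹ * ∫ y in ball c r, |f y * g y - 0|
            ≤ ((volume (ball c r)).toReal)⁻¹ * (M * ∫ y in ball c r, |g y|) :=
              mul_le_mul_of_nonneg_left hint (inv_nonneg.2 hv0.le)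
          _ = M * (((volume (ball c r)).toReal)⁻¹ * ∫ y in ball c r, |g y|) := by ring
          _ ≤ M * (PL.cg * Gp) := mul_le_mul_of_nonneg_left hhold hM0
      rw [hK0def]
      linarith
  -- pair bound for the product
  set K1 : ℝ := 2 * T + M * Sg2 + (PL.cg * Gp + Sg2) * Sf2 with hK1def
  have hSum2 : 0 ≤ (PL.cg * Gp + Sg2) * Sf2 :=
    mul_nonneg (add_nonneg (mul_nonneg hcg0 hGp0) hSg2_0) hSf2_0
  have hK1_0 : 0 ≤ K1 := by
    rw [hK1def]
    have := mul_nonneg hM0 hSg2_0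
    linarith
  have hPairFG : PairBoundF F (fun x => f x * g x) K1 := by
    intro c₁ r₁ c₂ r₂ h₂ h₁ h₁1 hsub
    have h₂₁ : r₂ < r₁ := PL.rad_lt h₂ hsub
    have h₂1 : r₂ ≤ 1 := le_of_lt (lt_of_lt_of_le h₂₁ h₁1)
    have hFrat : 1 ≤ F ((1 - Real.log r₂) / (1 - Real.log r₁)) :=
      hF1 _ (PL.one_le_ratio h₂ h₂₁ h₁1)
    have hFo : 1 ≤ F (1 - Real.log r₁) := hF1 _ (PL.one_le_omlog h₁ h₁1)
    have e2 := (PL.avg_sub_const h₂ (PL.intOn hfgloc c₂ r₂)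
      (ballAvg f c₂ r₂ * ballAvg g c₂ r₂)).trans (hKey c₂ r₂ h₂ h₂1)
    have e1 := (PL.avg_sub_const h₁ (PL.intOn hfgloc c₁ r₁)
      (ballAvg f c₁ r₁ * ballAvg g c₁ r₁)).trans (hKey c₁ r₁ h₁ h₁1)
    have m1 : |ballAvg f c₂ r₂| ≤ M := PL.avg_abs_le_of_ae h₂ (PL.intOn hfloc c₂ r₂) hfM
    have m2 := PL.pair_le hF1 hgpair h₂ h₁ h₁1 hsub
    have m3 : |ballAvg g c₁ r₁| ≤ PL.cg * Gp + Sg2 * F (1 - Real.log r₁) := hAvgG c₁ r₁ h₁ h₁1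
    have m4 := hPairF c₁ r₁ c₂ r₂ h₂ h₁ h₁1 hsub
    have mid : |ballAvg f c₂ r₂ * ballAvg g c₂ r₂ - ballAvg f c₁ r₁ * ballAvg g c₁ r₁|
        ≤ M * (Sg2 * F ((1 - Real.log r₂) / (1 - Real.log r₁))) + (PL.cg * Gp + Sg2) * Sf2 := by
      have hid : ballAvg f c₂ r₂ * ballAvg g c₂ r₂ - ballAvg f c₁ r₁ * ballAvg g c₁ r₁
          = ballAvg f c₂ r₂ * (ballAvg g c₂ r₂ - ballAvg g c₁ r₁)
            + ballAvg g c₁ r₁ * (ballAvg f c₂ r₂ - ballAvg f c₁ r₁) := by ring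
      rw [hid]
      refine (abs_add_le _ _).trans ?_
      rw [abs_mul, abs_mul]
      have p1 : |ballAvg f c₂ r₂| * |ballAvg g c₂ r₂ - ballAvg g c₁ r₁|
          ≤ M * (Sg2 * F ((1 - Real.log r₂) / (1 - Real.log r₁))) :=
        mul_le_mul m1 m2 (abs_nonneg _) hM0
      have p2 : |ballAvg g c₁ r₁| * |ballAvg f c₂ r₂ - ballAvg f c₁ r₁|
          ≤ (PL.cg * Gp + Sg2 * F (1 - Real.log r₁)) * (Sf2 / F (1 - Real.log r₁)) :=
        mul_le_mul m3 m4 (abs_nonneg _)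
          (add_nonneg (mul_nonneg hcg0 hGp0) (mul_nonneg hSg2_0 (by linarith)))
      have p3 := PL.alg_bound (mul_nonneg hcg0 hGp0) hSg2_0 hSf2_0 hFo
      linarith [p2.trans p3]
    have habc : ∀ x a b y : ℝ, |x - y| ≤ |x - a| + |a - b| + |y - b| := by
      intro x a b y
      have e : x - y = (x - a) + ((a - b) + (b - y)) := by ring
      calc |x - y| = |(x - a) + ((a - b) + (b - y))| := by rw [← e]
        _ ≤ |x - a| + |(a - b) + (b - y)| := abs_add_le _ _
        _ ≤ |x - a| + (|a - b| + |b - y|) := by linarith [abs_add_le (a - b) (b - y)]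
        _ = |x - a| + |a - b| + |y - b| := by rw [abs_sub_comm b y]; ring
    have tri := habc (ballAvg (fun x => f x * g x) c₂ r₂)
      (ballAvg f c₂ r₂ * ballAvg g c₂ r₂) (ballAvg f c₁ r₁ * ballAvg g c₁ r₁)
      (ballAvg (fun x => f x * g x) c₁ r₁)
    have hmain := tri.trans (add_le_add (add_le_add e2 mid) e1)
    have hfac : 0 ≤ (2 * T + (PL.cg * Gp + Sg2) * Sf2) *
        (F ((1 - Real.log r₂) / (1 - Real.log r₁)) - 1) :=
      mul_nonneg (by linarith) (by linarith)
    rw [hK1def]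
    have e : (2 * T + M * Sg2 + (PL.cg * Gp + Sg2) * Sf2)
          * F ((1 - Real.log r₂) / (1 - Real.log r₁))
        = (2 * T + (PL.cg * Gp + Sg2) * Sf2)
            * (F ((1 - Real.log r₂) / (1 - Real.log r₁)) - 1)
          + (2 * T + (PL.cg * Gp + Sg2) * Sf2)
          + M * (Sg2 * F ((1 - Real.log r₂) / (1 - Real.log r₁))) := by ring
    rw [e]
    linarith only [hfac, hmain]
  refine ⟨⟨⟨hfgloc, max K0 K1, fun c r hr => (hOscFG c r hr).trans (le_max_left _ _),
    fun c₁ r₁ c₂ r₂ h₂ h₁ h₁1 hsub => ?_⟩, hfgp⟩, ?_⟩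
  · have hFrat : 1 ≤ F ((1 - Real.log r₂) / (1 - Real.log r₁)) :=
      hF1 _ (PL.one_le_ratio h₂ (PL.rad_lt h₂ hsub) h₁1)
    exact (hPairFG c₁ r₁ c₂ r₂ h₂ h₁ h₁1 hsub).trans
      (mul_le_mul_of_nonneg_right (le_max_right _ _) (by linarith))
  · -- norm inequality
    have hb1 : bmoNorm (fun x => f x * g x) ≤ K0 := PL.bmoNorm_le hOscFG hK0_0
    have hb2 : PL.pairSup F (fun x => f x * g x) ≤ K1 := PL.pairSup_le hF1 hPairFG hK1_0
    rw [PL.bmoFNorm_eq, PL.bmoFNorm_eq, PL.lmoFNorm_eq, ← hSg1def, ← hSg2def, ← hSf1def,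
      ← hSf2def]
    have hexp : 8 * PL.cg * (Sf1 + Sf2 + M) * (Sg1 + Sg2 + Gp)
        = 8 * PL.cg * (Sf1 * Sg1) + 8 * PL.cg * (Sf1 * Sg2) + 8 * PL.cg * (Sf1 * Gp)
          + 8 * PL.cg * (Sf2 * Sg1) + 8 * PL.cg * (Sf2 * Sg2) + 8 * PL.cg * (Sf2 * Gp)
          + 8 * PL.cg * (M * Sg1) + 8 * PL.cg * (M * Sg2) + 8 * PL.cg * (M * Gp) := by ring
    have t1 : 4 * (M * Sg1) ≤ 8 * PL.cg * (M * Sg1) := by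
      nlinarith [mul_nonneg hM0 hSg1_0]
    have t2 : 4 * (PL.cg * Gp * Sf1) ≤ 8 * PL.cg * (Sf1 * Gp) := by
      nlinarith [mul_nonneg (mul_nonneg hcg0 hGp0) hSf1_0]
    have t3 : 4 * (Sg2 * Sf1) ≤ 8 * PL.cg * (Sf1 * Sg2) := by
      nlinarith [mul_nonneg hSg2_0 hSf1_0]
    have t4 : 2 * (M * (PL.cg * Gp)) ≤ 8 * PL.cg * (M * Gp) := by
      nlinarith [mul_nonneg hM0 (mul_nonneg hcg0 hGp0)]
    have t5 : M * Sg2 ≤ 8 * PL.cg * (M * Sg2) := by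
      nlinarith [mul_nonneg hM0 hSg2_0]
    have t6 : PL.cg * Gp * Sf2 ≤ 8 * PL.cg * (Sf2 * Gp) := by
      nlinarith [mul_nonneg (mul_nonneg hcg0 hGp0) hSf2_0]
    have t7 : Sg2 * Sf2 ≤ 8 * PL.cg * (Sf2 * Sg2) := by
      nlinarith [mul_nonneg hSg2_0 hSf2_0]
    have n1 : 0 ≤ 8 * PL.cg * (Sf1 * Sg1) := by positivity
    have n2 : 0 ≤ 8 * PL.cg * (Sf2 * Sg1) := by positivity
    have hKsum : K0 + K1 ≤ 8 * PL.cg * (Sf1 + Sf2 + M) * (Sg1 + Sg2 + Gp) := by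
      have expand : K0 + K1 = 4 * (M * Sg1) + 4 * (PL.cg * Gp * Sf1) + 4 * (Sg2 * Sf1)
          + 2 * (M * (PL.cg * Gp)) + M * Sg2 + PL.cg * Gp * Sf2 + Sg2 * Sf2 := by
        rw [hK0def, hK1def, hTdef]; ring
      rw [expand, hexp]
      linarith only [t1, t2, t3, t4, t5, t6, t7, n1, n2]
    calc bmoNorm (fun x => f x * g x) + PL.pairSup F (fun x => f x * g x)
        ≤ K0 + K1 := add_le_add hb1 hb2
      _ ≤ 8 * PL.cg * (Sf1 + Sf2 + M) * (Sg1 + Sg2 + Gp) := hKsum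
      _ = 8 * PL.cg * (Sf1 + Sf2 + M) * (Sg1 + Sg2 + Gp) := rfl
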